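/- Let φ satisfy: for some constants C, m with φ'(s) ≥ C|s|^{m-1} whenever |s| ≥ C, and let the smoothing estimate sup_x |u(x,t)| ≤ max{C, C₁ t^{-γ_p} ‖u₀‖_p^{δ_p}} hold at t = 1 for all solutions, with γ_p = N/(N(m-1) + σp) and δ_p = σpγ_p/N, for the class of nonlinearities satisfying φ'(s) ≥ C|s|^{m-1} for ALL s (m > 0). Then the rescaling v(x,t) = λ^{γ_p} u(λ^{pγ_p/N} x, λ t) solves ∂_t v + (-Δ)^{σ/2} φ̃(v) = 0 with φ̃(s) = λ^{m γ_p} φ(λ^{-γ_p} s), and φ̃'(s) = λ^{(m-1)γ_p} φ'(λ^{-γ_p}s) ≥ C|s|^{m-1}; consequently, ‖u(·,t)‖_∞ ≤ C₁ t^{-γ_p} ‖u₀‖_p^{δ_p} for every t > 0. -/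

import Mathlib

open MeasureTheory
open scoped ENNReal NNReal

/-- The fractional Laplacian `(-Δ)^{σ/2}` (up to its normalizing constant), defined
through the second-difference singular integral. -/
noncomputable def fracLap (σ : ℝ) {N : ℕ} (w : EuclideanSpace ℝ (Fin N) → ℝ)
    (x : EuclideanSpace ℝ (Fin N)) : ℝ :=
  ∫ z : EuclideanSpace ℝ (Fin N), (2 * w x - w (x + z) - w (x - z)) / ‖z‖ ^ ((N : ℝ) + σ)

/-- `w` is a (pointwise) solution of `∂_t w + (-Δ)^{σ/2}ψ(w) = 0` on `ℝ^N × (0,∞)`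
with initial data `w₀`. -/
def IsSol (σ : ℝ) {N : ℕ} (ψ : ℝ → ℝ) (w : EuclideanSpace ℝ (Fin N) × ℝ → ℝ)
    (w₀ : EuclideanSpace ℝ (Fin N) → ℝ) : Prop :=
  (∀ x, w (x, 0) = w₀ x) ∧
  ∀ x (t : ℝ), 0 < t →
    HasDerivAt (fun s => w (x, s)) (-(fracLap σ (fun y => ψ (w (y, t))) x)) t

/-- Scaling of the fractional Laplacian under dilations. -/
lemma aux_fracLap_scale {N : ℕ} (σ : ℝ) (hNσ : 0 < (N:ℝ) + σ)
    (g : EuclideanSpace ℝ (Fin N) → ℝ) (c B : ℝ) (hB : 0 < B) (x : EuclideanSpace ℝ (Fin N)) :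
    fracLap σ (fun y => c * g (B • y)) x = c * B ^ σ * fracLap σ g (B • x) := by
  have hBe : (0:ℝ) < B ^ ((N:ℝ) + σ) := Real.rpow_pos_of_pos hB _
  set F : EuclideanSpace ℝ (Fin N) → ℝ :=
    fun w => (2 * g (B • x) - g (B • x + w) - g (B • x - w)) / ‖w‖ ^ ((N:ℝ)+σ) with hF
  have key : ∀ z : EuclideanSpace ℝ (Fin N),
      (2 * (c * g (B • x)) - c * g (B • (x + z)) - c * g (B • (x - z))) / ‖z‖ ^ ((N:ℝ) + σ)
      = c * B ^ ((N:ℝ) + σ) * F (B • z) := by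
    intro z
    rcases eq_or_ne z 0 with rfl | hz
    · simp [hF, Real.zero_rpow hNσ.ne']
    · have hz' : (0:ℝ) < ‖z‖ := norm_pos_iff.2 hz
      have hze : (0:ℝ) < ‖z‖ ^ ((N:ℝ) + σ) := Real.rpow_pos_of_pos hz' _
      simp only [hF, smul_add, smul_sub, norm_smul, Real.norm_eq_abs, abs_of_pos hB,
        Real.mul_rpow hB.le (norm_nonneg z)]
      field_simp
  have hgoal : fracLap σ (fun y => c * g (B • y)) x
      = ∫ z : EuclideanSpace ℝ (Fin N), c * B ^ ((N:ℝ) + σ) * F (B • z) := by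
    unfold fracLap
    exact integral_congr_ae (Filter.Eventually.of_forall key)
  rw [hgoal, MeasureTheory.integral_const_mul,
    Measure.integral_comp_smul_of_nonneg volume F B (hR := hB.le), finrank_euclideanSpace_fin]
  have h1 : B ^ ((N:ℝ) + σ) = B ^ (N:ℕ) * B ^ σ := by
    rw [Real.rpow_add hB, Real.rpow_natCast]
  have h2 : (B:ℝ) ^ (N:ℕ) ≠ 0 := by positivity
  rw [smul_eq_mul, h1]
  show _ = c * B ^ σ * ∫ z, F z
  field_simp

/-- Scaling of the `L^p` norm under dilations. -/
lemma aux_eLpNorm_scale {N : ℕ} (p : ℝ) (hp : 1 ≤ p)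
    (g : EuclideanSpace ℝ (Fin N) → ℝ) (A B Up : ℝ) (hA : 0 < A) (hB : 0 < B) (hUp : 0 ≤ Up)
    (hg : eLpNorm g (ENNReal.ofReal p) volume = ENNReal.ofReal Up) :
    eLpNorm (fun x : EuclideanSpace ℝ (Fin N) => A * g (B • x)) (ENNReal.ofReal p) volume
      = ENNReal.ofReal (A * B ^ (-(N:ℝ)/p) * Up) := by
  have hp0 : (0:ℝ) < p := lt_of_lt_of_le one_pos hp
  have hq0 : ENNReal.ofReal p ≠ 0 := (ENNReal.ofReal_pos.2 hp0).ne'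
  have hqt : ENNReal.ofReal p ≠ ⊤ := ENNReal.ofReal_ne_top
  have hpr : (ENNReal.ofReal p).toReal = p := ENNReal.toReal_ofReal hp0.le
  have h1 : (fun x : EuclideanSpace ℝ (Fin N) => A * g (B • x))
      = A • (fun x : EuclideanSpace ℝ (Fin N) => g (B • x)) := rfl
  rw [h1, eLpNorm_const_smul]
  set F : EuclideanSpace ℝ (Fin N) → ℝ≥0∞ := fun y => (‖g y‖₊ : ℝ≥0∞) ^ p with hFdef
  set e : EuclideanSpace ℝ (Fin N) ≃ᵐ EuclideanSpace ℝ (Fin N) :=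
    (Homeomorph.smul (isUnit_iff_ne_zero.2 hB.ne').unit).toMeasurableEquiv with hedef
  have hcoe : ⇑e = fun x : EuclideanSpace ℝ (Fin N) => B • x := by
    funext y
    show (isUnit_iff_ne_zero.2 hB.ne').unit • y = B • y
    rw [Units.smul_def, IsUnit.unit_spec]
  have hmap : Measure.map (fun x : EuclideanSpace ℝ (Fin N) => B • x) volume
      = ENNReal.ofReal |((B:ℝ) ^ Module.finrank ℝ (EuclideanSpace ℝ (Fin N)))⁻¹| • volume :=
    Measure.map_addHaar_smul volume hB.ne'
  have h2 : ∫⁻ x, F (B • x)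
      = ENNReal.ofReal |((B:ℝ) ^ Module.finrank ℝ (EuclideanSpace ℝ (Fin N)))⁻¹| * ∫⁻ y, F y := by
    have h3 := MeasureTheory.lintegral_map_equiv
      (μ := (volume : Measure (EuclideanSpace ℝ (Fin N)))) F e
    rw [hcoe] at h3
    rw [hmap, lintegral_smul_measure] at h3
    exact h3.symm
  rw [eLpNorm_eq_lintegral_rpow_enorm_toReal hq0 hqt, hpr] at hg
  rw [eLpNorm_eq_lintegral_rpow_enorm_toReal hq0 hqt, hpr]
  rw [show (∫⁻ x, (‖g (B • x)‖ₑ) ^ p) = ∫⁻ x, F (B • x) from rfl, h2,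
    ENNReal.mul_rpow_of_nonneg _ _ (by positivity : (0:ℝ) ≤ 1/p)]
  rw [show ((∫⁻ y, F y) ^ (1/p) : ℝ≥0∞) = ENNReal.ofReal Up from hg]
  have habs : (0:ℝ) < |((B:ℝ) ^ Module.finrank ℝ (EuclideanSpace ℝ (Fin N)))⁻¹| := by positivity
  rw [ENNReal.ofReal_rpow_of_pos habs]
  rw [show (‖A‖ₑ) = ENNReal.ofReal A from Real.enorm_eq_ofReal hA.le]
  rw [← ENNReal.ofReal_mul
    (by positivity : (0:ℝ) ≤ |((B:ℝ) ^ Module.finrank ℝ (EuclideanSpace ℝ (Fin N)))⁻¹| ^ (1/p)),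
    ← ENNReal.ofReal_mul hA.le]
  congr 1
  rw [finrank_euclideanSpace_fin]
  have hb1 : ((B:ℝ) ^ (N:ℕ))⁻¹ = B ^ (-(N:ℝ)) := by
    rw [← Real.rpow_natCast B N, ← Real.rpow_neg hB.le]
  rw [abs_of_pos (by positivity), hb1, ← Real.rpow_mul hB.le]
  rw [show (-(N:ℝ)) * (1/p) = -(N:ℝ)/p by ring]
  ring

/-- Chain rule for the rescaled nonlinearity. -/
lemma aux_deriv (φ : ℝ → ℝ) (hφ : Differentiable ℝ φ) (c b s : ℝ) :
    deriv (fun r => c * φ (b * r)) s = c * b * deriv φ (b * s) := by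
  have h1 : HasDerivAt (fun r : ℝ => b * r) b s := by
    simpa using (hasDerivAt_id s).const_mul b
  have h : HasDerivAt (fun r => c * φ (b * r)) (c * (deriv φ (b * s) * b)) s :=
    (HasDerivAt.comp s (hφ (b * s)).hasDerivAt h1).const_mul c
  rw [h.deriv]; ring

/-- Rescalings of solutions are solutions of the rescaled equation. -/
lemma aux_isSol_scale {N : ℕ} (σ : ℝ) (hNσ : 0 < (N:ℝ) + σ) (φ ψ : ℝ → ℝ)
    (u : EuclideanSpace ℝ (Fin N) × ℝ → ℝ) (u₀ : EuclideanSpace ℝ (Fin N) → ℝ)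
    (A B lam : ℝ) (hB : 0 < B) (hlam : 0 < lam)
    (hψ : ∀ s, ψ (A * s) = A * lam * B ^ (-σ) * φ s)
    (hu : IsSol σ φ u u₀) :
    IsSol σ ψ (fun Y : EuclideanSpace ℝ (Fin N) × ℝ => A * u (B • Y.1, lam * Y.2))
      (fun x => A * u₀ (B • x)) := by
  constructor
  · intro x; simp only [mul_zero]; rw [hu.1]
  · intro x t ht
    have hd := hu.2 (B • x) (lam * t) (mul_pos hlam ht)
    have h1 : HasDerivAt (fun s : ℝ => lam * s) lam t := by
      simpa using (hasDerivAt_id t).const_mul lam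
    have h2 : HasDerivAt (fun s : ℝ => A * u (B • x, lam * s))
        (A * (-(fracLap σ (fun y => φ (u (y, lam * t))) (B • x)) * lam)) t :=
      (HasDerivAt.comp t hd h1).const_mul A
    convert h2 using 1
    have h3 : (fun y : EuclideanSpace ℝ (Fin N) => ψ (A * u (B • y, lam * t)))
        = fun y => (A * lam * B ^ (-σ)) * ((fun w => φ (u (w, lam * t))) (B • y)) := by
      funext y; rw [hψ]
    show -(fracLap σ (fun y => ψ (A * u (B • y, lam * t))) x) = _
    have h4 := aux_fracLap_scale σ hNσ (fun w => φ (u (w, lam * t)))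
      (A * lam * B ^ (-σ)) B hB x
    rw [h3, h4]
    have hBσ : B ^ (-σ) * B ^ σ = 1 := by
      rw [← Real.rpow_add hB]; simp
    have h5 : A * lam * B ^ (-σ) * B ^ σ = A * lam := by
      rw [mul_assoc (A * lam), hBσ, mul_one]
    rw [h5]; ring

/-- Scaling argument for the smoothing effect: the rescaled function
`v(x,t) = λ^{γ_p} u(λ^{pγ_p/N} x, λt)` solves the equation with nonlinearity
`φ̃(s) = λ^{mγ_p} φ(λ^{-γ_p}s)`, whose derivative is
`φ̃'(s) = λ^{(m-1)γ_p} φ'(λ^{-γ_p}s) ≥ C|s|^{m-1}`; consequently, from the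
smoothing estimate at `t = 1`, `‖u(·,t)‖_∞ ≤ C₁ t^{-γ_p} ‖u₀‖_p^{δ_p}` for all `t > 0`. -/
theorem scaling_decay (N : ℕ) (hN : 1 ≤ N) (σ m p C C₁ γp δp Up : ℝ)
    (hσ : 0 < σ) (hσ2 : σ < 2) (hm : 0 < m) (hp : 1 ≤ p) (hpm : (1 - m) * N / σ < p)
    (hγp : γp = N / (N * (m - 1) + σ * p)) (hδp : δp = σ * p * γp / N)
    (hC : 0 < C) (hC₁ : 0 < C₁) (hUp : 0 ≤ Up)
    (φ : ℝ → ℝ) (hφ : Differentiable ℝ φ)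
    (hφ' : ∀ s : ℝ, C * |s| ^ (m - 1) ≤ deriv φ s)
    (u : EuclideanSpace ℝ (Fin N) × ℝ → ℝ) (u₀ : EuclideanSpace ℝ (Fin N) → ℝ)
    (hu : IsSol σ φ u u₀)
    (hUpnorm : eLpNorm u₀ (ENNReal.ofReal p) volume = ENNReal.ofReal Up)
    (hSmooth : ∀ (ψ : ℝ → ℝ) (w : EuclideanSpace ℝ (Fin N) × ℝ → ℝ)
        (w₀ : EuclideanSpace ℝ (Fin N) → ℝ) (Kp : ℝ), 0 ≤ Kp →
        IsSol σ ψ w w₀ →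
        (∀ s : ℝ, C * |s| ^ (m - 1) ≤ deriv ψ s) →
        eLpNorm w₀ (ENNReal.ofReal p) volume = ENNReal.ofReal Kp →
        ∀ x, |w (x, 1)| ≤ max C (C₁ * Kp ^ δp)) :
    (∀ lam : ℝ, 0 < lam → ∀ s : ℝ,
      deriv (fun r => lam ^ (m * γp) * φ (lam ^ (-γp) * r)) s
        = lam ^ ((m - 1) * γp) * deriv φ (lam ^ (-γp) * s)) ∧
    (∀ lam : ℝ, 0 < lam → ∀ s : ℝ,
      C * |s| ^ (m - 1) ≤ deriv (fun r => lam ^ (m * γp) * φ (lam ^ (-γp) * r)) s) ∧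
    (∀ lam : ℝ, 0 < lam →
      IsSol σ (fun r => lam ^ (m * γp) * φ (lam ^ (-γp) * r))
        (fun Y : EuclideanSpace ℝ (Fin N) × ℝ =>
          lam ^ γp * u (lam ^ (p * γp / N) • Y.1, lam * Y.2))
        (fun x => lam ^ γp * u₀ (lam ^ (p * γp / N) • x))) ∧
    (∀ t : ℝ, 0 < t → ∀ x, |u (x, t)| ≤ C₁ * t ^ (-γp) * Up ^ δp) := by
  have hN0 : (0:ℝ) < N := by
    have : (1:ℝ) ≤ N := by exact_mod_cast hN
    linarith
  have hp0 : (0:ℝ) < p := lt_of_lt_of_le one_pos hp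
  have hD : 0 < (N:ℝ) * (m - 1) + σ * p := by
    have h := (div_lt_iff₀ hσ).1 hpm
    nlinarith
  have hγpos : 0 < γp := by rw [hγp]; exact div_pos hN0 hD
  have hkey : σ * p * γp / N + (m - 1) * γp = 1 := by
    rw [hγp]; field_simp; ring
  have hNσ : 0 < (N:ℝ) + σ := by linarith
  -- conjunct 1
  have c1 : ∀ lam : ℝ, 0 < lam → ∀ s : ℝ,
      deriv (fun r => lam ^ (m * γp) * φ (lam ^ (-γp) * r)) s
        = lam ^ ((m - 1) * γp) * deriv φ (lam ^ (-γp) * s) := by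
    intro lam hlam s
    rw [aux_deriv φ hφ]
    congr 1
    rw [← Real.rpow_add hlam]
    congr 1; ring
  -- conjunct 2
  have c2 : ∀ lam : ℝ, 0 < lam → ∀ s : ℝ,
      C * |s| ^ (m - 1) ≤ deriv (fun r => lam ^ (m * γp) * φ (lam ^ (-γp) * r)) s := by
    intro lam hlam s
    rw [c1 lam hlam s]
    have h := hφ' (lam ^ (-γp) * s)
    have hpos : (0:ℝ) < lam ^ ((m - 1) * γp) := Real.rpow_pos_of_pos hlam _
    have habs : |lam ^ (-γp) * s| = lam ^ (-γp) * |s| := by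
      rw [abs_mul, abs_of_pos (Real.rpow_pos_of_pos hlam _)]
    have hrw : lam ^ ((m - 1) * γp) * (C * |lam ^ (-γp) * s| ^ (m - 1)) = C * |s| ^ (m - 1) := by
      rw [habs, Real.mul_rpow (Real.rpow_pos_of_pos hlam _).le (abs_nonneg s),
        ← Real.rpow_mul hlam.le, show (-γp) * (m - 1) = -((m - 1) * γp) by ring,
        Real.rpow_neg hlam.le]
      field_simp
    calc C * |s| ^ (m - 1) = lam ^ ((m - 1) * γp) * (C * |lam ^ (-γp) * s| ^ (m - 1)) := hrw.symm
      _ ≤ lam ^ ((m - 1) * γp) * deriv φ (lam ^ (-γp) * s) :=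
          mul_le_mul_of_nonneg_left h hpos.le
  -- conjunct 3
  have c3 : ∀ lam : ℝ, 0 < lam →
      IsSol σ (fun r => lam ^ (m * γp) * φ (lam ^ (-γp) * r))
        (fun Y : EuclideanSpace ℝ (Fin N) × ℝ =>
          lam ^ γp * u (lam ^ (p * γp / N) • Y.1, lam * Y.2))
        (fun x => lam ^ γp * u₀ (lam ^ (p * γp / N) • x)) := by
    intro lam hlam
    have hB : (0:ℝ) < lam ^ (p * γp / N) := Real.rpow_pos_of_pos hlam _
    refine aux_isSol_scale σ hNσ φ _ u u₀ (lam ^ γp) (lam ^ (p * γp / N)) lam hB hlam ?_ hu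
    intro s
    have h1 : lam ^ (-γp) * (lam ^ γp * s) = s := by
      rw [← mul_assoc, ← Real.rpow_add hlam]
      norm_num
    show lam ^ (m * γp) * φ (lam ^ (-γp) * (lam ^ γp * s)) = _
    rw [h1]
    congr 1
    rw [← Real.rpow_mul hlam.le]
    calc lam ^ (m * γp) = lam ^ (γp + 1 + p * γp / N * (-σ)) := by
          congr 1
          linear_combination hkey
      _ = lam ^ (γp + 1) * lam ^ (p * γp / N * (-σ)) := Real.rpow_add hlam _ _
      _ = lam ^ γp * lam * lam ^ (p * γp / N * (-σ)) := by
          rw [Real.rpow_add_one hlam.ne']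
  -- conjunct 4
  have c4 : ∀ t : ℝ, 0 < t → ∀ x, |u (x, t)| ≤ C₁ * t ^ (-γp) * Up ^ δp := by
    intro t ht x
    have key4 : ∀ K : ℝ, 0 < K →
        |u (x, t)| ≤ C₁ * t ^ (-γp) * Up ^ δp + C / K * t ^ (-γp) := by
      intro K hK
      set A := K * t ^ γp with hAdef
      set B := K ^ ((1 - m) / σ) * t ^ (p * γp / N) with hBdef
      have hA : 0 < A := mul_pos hK (Real.rpow_pos_of_pos ht _)
      have hB : 0 < B := mul_pos (Real.rpow_pos_of_pos hK _) (Real.rpow_pos_of_pos ht _)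
      set ψ : ℝ → ℝ := fun s => (A * t * B ^ (-σ)) * φ (A⁻¹ * s) with hψdef
      have hψ : ∀ s, ψ (A * s) = A * t * B ^ (-σ) * φ s := by
        intro s
        show (A * t * B ^ (-σ)) * φ (A⁻¹ * (A * s)) = _
        rw [inv_mul_cancel_left₀ hA.ne']
      have hsol := aux_isSol_scale σ hNσ φ ψ u u₀ A B t hB ht hψ hu
      -- derivative bound for ψ
      have hBσ : t * B ^ (-σ) = A ^ (m - 1) := by
        rw [hBdef, hAdef,
          Real.mul_rpow (Real.rpow_pos_of_pos hK _).le (Real.rpow_pos_of_pos ht _).le,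
          ← Real.rpow_mul hK.le, ← Real.rpow_mul ht.le,
          Real.mul_rpow hK.le (Real.rpow_pos_of_pos ht _).le, ← Real.rpow_mul ht.le]
        have e1 : (1 - m) / σ * (-σ) = m - 1 := by field_simp; ring
        have e2 : t * t ^ (p * γp / N * (-σ)) = t ^ (γp * (m - 1)) := by
          rw [show γp * (m - 1) = 1 + p * γp / N * (-σ) by linear_combination hkey,
            Real.rpow_add ht, Real.rpow_one]
        rw [e1, ← e2]
        ring
      have hd : ∀ s, C * |s| ^ (m - 1) ≤ deriv ψ s := by
        intro s
        have hder : deriv ψ s = (A * t * B ^ (-σ)) * A⁻¹ * deriv φ (A⁻¹ * s) :=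
          aux_deriv φ hφ _ _ s
        have h5 : (A * t * B ^ (-σ)) * A⁻¹ = A ^ (m - 1) := by
          rw [← hBσ]
          field_simp
        rw [hder, h5]
        have h := hφ' (A⁻¹ * s)
        have habs : |A⁻¹ * s| = A⁻¹ * |s| := by
          rw [abs_mul, abs_of_pos (inv_pos.2 hA)]
        have hApos : 0 < A ^ (m - 1) := Real.rpow_pos_of_pos hA _
        have hrw : A ^ (m - 1) * (C * |A⁻¹ * s| ^ (m - 1)) = C * |s| ^ (m - 1) := by
          rw [habs, Real.mul_rpow (inv_pos.2 hA).le (abs_nonneg s),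
            show A⁻¹ = A ^ (-1 : ℝ) from (Real.rpow_neg_one A).symm,
            ← Real.rpow_mul hA.le, show (-1 : ℝ) * (m - 1) = -(m - 1) by ring,
            Real.rpow_neg hA.le]
          field_simp
        calc C * |s| ^ (m - 1) = A ^ (m - 1) * (C * |A⁻¹ * s| ^ (m - 1)) := hrw.symm
          _ ≤ A ^ (m - 1) * deriv φ (A⁻¹ * s) := mul_le_mul_of_nonneg_left h hApos.le
      -- L^p norm of rescaled initial data
      set Kp := A * B ^ (-(N:ℝ)/p) * Up with hKpdef
      have hKp0 : 0 ≤ Kp := by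
        have : (0:ℝ) < B ^ (-(N:ℝ)/p) := Real.rpow_pos_of_pos hB _
        exact mul_nonneg (mul_nonneg hA.le this.le) hUp
      have hKpnorm := aux_eLpNorm_scale p hp u₀ A B Up hA hB hUp hUpnorm
      rw [← hKpdef] at hKpnorm
      have hest := hSmooth ψ _ _ Kp hKp0 hsol hd hKpnorm (B⁻¹ • x)
      have hsmul : B • B⁻¹ • x = x := by
        rw [smul_smul, mul_inv_cancel₀ hB.ne', one_smul]
      simp only [hsmul, mul_one] at hest
      rw [abs_mul, abs_of_pos hA] at hest
      -- compute Kp ^ δp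
      have hBNp : B ^ (-(N:ℝ)/p) = K ^ (-((1 - m) * N / (σ * p))) * t ^ (-γp) := by
        rw [hBdef,
          Real.mul_rpow (Real.rpow_pos_of_pos hK _).le (Real.rpow_pos_of_pos ht _).le,
          ← Real.rpow_mul hK.le, ← Real.rpow_mul ht.le]
        rw [show (1 - m) / σ * (-(N:ℝ)/p) = -((1 - m) * N / (σ * p)) by field_simp,
          show p * γp / (N:ℝ) * (-(N:ℝ)/p) = -γp by field_simp]
      have hKpeq : Kp = K ^ (1 - (1 - m) * N / (σ * p)) * Up := by
        rw [hKpdef, hBNp, hAdef]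
        have h7 : K ^ (1 - (1 - m) * N / (σ * p))
            = K * K ^ (-((1 - m) * N / (σ * p))) := by
          rw [show (1 - (1 - m) * N / (σ * p)) = 1 + -((1 - m) * N / (σ * p)) by ring,
            Real.rpow_add hK, Real.rpow_one]
        have h8 : t ^ γp * t ^ (-γp) = 1 := by
          rw [← Real.rpow_add ht]; norm_num
        calc K * t ^ γp * (K ^ (-((1 - m) * N / (σ * p))) * t ^ (-γp)) * Up
            = (K * K ^ (-((1 - m) * N / (σ * p)))) * (t ^ γp * t ^ (-γp)) * Up := by ring
          _ = K ^ (1 - (1 - m) * N / (σ * p)) * Up := by rw [h7, h8]; ring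
      have hKpval : Kp ^ δp = K * Up ^ δp := by
        rw [hKpeq, Real.mul_rpow (Real.rpow_pos_of_pos hK _).le hUp, ← Real.rpow_mul hK.le]
        have h6 : (1 - (1 - m) * N / (σ * p)) * δp = 1 := by
          rw [hδp, hγp]; field_simp; ring
        rw [h6, Real.rpow_one]
      rw [hKpval] at hest
      -- conclude
      have hmax : max C (C₁ * (K * Up ^ δp)) ≤ C + C₁ * (K * Up ^ δp) := by
        have h9 : 0 ≤ C₁ * (K * Up ^ δp) := by positivity
        exact max_le (by linarith) (by linarith)
      have h10 : A * |u (x, t)| ≤ C + C₁ * (K * Up ^ δp) := le_trans hest hmax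
      have htγ : t ^ (-γp) = (t ^ γp)⁻¹ := Real.rpow_neg ht.le _
      have htp : (0:ℝ) < t ^ γp := Real.rpow_pos_of_pos ht _
      have h11 : |u (x, t)| ≤ (C + C₁ * (K * Up ^ δp)) / A := by
        rw [le_div_iff₀ hA]
        linarith [h10]
      have h12 : (C + C₁ * (K * Up ^ δp)) / A
          = C₁ * t ^ (-γp) * Up ^ δp + C / K * t ^ (-γp) := by
        rw [hAdef, htγ]
        field_simp
        ring
      linarith [h11, h12.symm.le, h12.le]
    refine le_of_forall_pos_le_add fun ε hε => ?_
    have htγpos : (0:ℝ) < t ^ (-γp) := Real.rpow_pos_of_pos ht _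
    have hK : 0 < C * t ^ (-γp) / ε := by positivity
    have h := key4 (C * t ^ (-γp) / ε) hK
    have heq : C / (C * t ^ (-γp) / ε) * t ^ (-γp) = ε := by
      field_simp
    linarith
  exact ⟨c1, c2, c3, c4⟩
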